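/- arXiv:1611.07468 — 2 statements merged into one kernel-verified Lean document; each statement's English description precedes it below -/
import Mathlib

section
/- Let G and H be connected graphs and U a non-empty subset of V(G). Then |E(G(U)ΠH)| = |E(G)|·|V(H)| + |E(H)|·|U|, where G(U)ΠH is the generalized hierarchical product. -/
open SimpleGraph Finset
open scoped Classical

noncomputable section

/-- The generalized hierarchical product `G(U)ΠH`. -/
def hierProd {α β : Type*} (G : SimpleGraph α) (H : SimpleGraph β) (U : Set α) :
    SimpleGraph (α × β) where
  Adj p q := (p.1 = q.1 ∧ p.1 ∈ U ∧ H.Adj p.2 q.2) ∨ (p.2 = q.2 ∧ G.Adj p.1 q.1)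
  symm := by
    constructor
    rintro p q (⟨h1, h2, h3⟩ | ⟨h1, h2⟩)
    · exact Or.inl ⟨h1.symm, h1 ▸ h2, h3.symm⟩
    · exact Or.inr ⟨h1.symm, h2.symm⟩
  loopless := by
    constructor
    rintro p (⟨_, _, h⟩ | ⟨_, h⟩)
    · exact H.irrefl h
    · exact G.irrefl h

/-- The F-index (forgotten topological index): sum of cubes of degrees. -/
def Findex {α : Type*} [Fintype α] (G : SimpleGraph α) : ℕ :=
  ∑ v, G.degree v ^ 3

/-- The first Zagreb index: sum of squares of degrees. -/
def M1 {α : Type*} [Fintype α] (G : SimpleGraph α) : ℕ :=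
  ∑ v, G.degree v ^ 2

/-- The general first Zagreb index with exponent `n`. -/
def xiIndex {α : Type*} [Fintype α] (G : SimpleGraph α) (n : ℕ) : ℕ :=
  ∑ v, G.degree v ^ n

/-- The redefined Zagreb index `ReZG(G) = Σ_{uv∈E} d(u)d(v)(d(u)+d(v))`. -/
def ReZG {α : Type*} [Fintype α] (G : SimpleGraph α) : ℕ :=
  ∑ e ∈ G.edgeFinset,
    Sym2.lift ⟨fun u v => G.degree u * G.degree v * (G.degree u + G.degree v),
      fun u v => by ring⟩ e

/-- The subdivision graph `S(G)`: each edge replaced by a path of length two. -/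
def Sgraph {α : Type*} (G : SimpleGraph α) : SimpleGraph (α ⊕ ↥G.edgeSet) where
  Adj x y :=
    match x, y with
    | Sum.inl u, Sum.inr e => u ∈ (e : Sym2 α)
    | Sum.inr e, Sum.inl u => u ∈ (e : Sym2 α)
    | _, _ => False
  symm := by constructor; rintro (u | e) (v | f) h <;> simp_all
  loopless := by constructor; rintro (u | e) h <;> simp_all

/-- The graph on `V(G) ⊕ E(G)` whose only edges are the original edges of `G`. -/
def Ograph {α : Type*} (G : SimpleGraph α) : SimpleGraph (α ⊕ ↥G.edgeSet) where
  Adj x y :=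
    match x, y with
    | Sum.inl u, Sum.inl v => G.Adj u v
    | _, _ => False
  symm := by constructor; rintro (u | e) (v | f) h <;> simp_all <;> exact h.symm
  loopless := by constructor; rintro (u | e) h <;> simp_all

/-- The graph on `V(G) ⊕ E(G)` whose edges join pairs of adjacent edges of `G`
(line-graph adjacency). -/
def Lgraph {α : Type*} (G : SimpleGraph α) : SimpleGraph (α ⊕ ↥G.edgeSet) where
  Adj x y :=
    match x, y with
    | Sum.inr e, Sum.inr f => e ≠ f ∧ ∃ u, u ∈ (e : Sym2 α) ∧ u ∈ (f : Sym2 α)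
    | _, _ => False
  symm := by
    constructor
    rintro (u | e) (v | f) h <;> simp_all
    exact ⟨Ne.symm h.1, h.2.imp fun u hu => hu.symm⟩
  loopless := by constructor; rintro (u | e) h <;> simp_all

/-- The triangle parallel graph `R(G)`. -/
def Rgraph {α : Type*} (G : SimpleGraph α) : SimpleGraph (α ⊕ ↥G.edgeSet) :=
  Sgraph G ⊔ Ograph G

/-- The line superposition graph `Q(G)`. -/
def Qgraph {α : Type*} (G : SimpleGraph α) : SimpleGraph (α ⊕ ↥G.edgeSet) :=
  Sgraph G ⊔ Lgraph G

/-- The total graph `T(G)`. -/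
def Tgraph {α : Type*} (G : SimpleGraph α) : SimpleGraph (α ⊕ ↥G.edgeSet) :=
  Sgraph G ⊔ Ograph G ⊔ Lgraph G

/-- The F-sum `G +_F H`, where `K` is one of `S(G), R(G), Q(G), T(G)`:
the generalized hierarchical product `K(V(G))ΠH`. -/
def FSum {α β : Type*} {G : SimpleGraph α} (K : SimpleGraph (α ⊕ ↥G.edgeSet))
    (H : SimpleGraph β) : SimpleGraph ((α ⊕ ↥G.edgeSet) × β) :=
  hierProd K H (Set.range Sum.inl)

end

lemma hierProd_degree {α β : Type*} [Fintype α] [Fintype β]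
    (G : SimpleGraph α) (H : SimpleGraph β) (U : Set α) (p : α × β) :
    (hierProd G H U).degree p =
      G.degree p.1 + (if p.1 ∈ U then H.degree p.2 else 0) := by
  classical
  rw [← card_neighborFinset_eq_degree]
  have hset : (hierProd G H U).neighborFinset p =
      (G.neighborFinset p.1).image (fun u => (u, p.2)) ∪
      (if p.1 ∈ U then (H.neighborFinset p.2).image (fun v => (p.1, v)) else ∅) := by
    ext q
    rw [mem_neighborFinset]
    by_cases hu : p.1 ∈ U <;>
      simp only [mem_neighborFinset, hierProd, hu, if_true, if_false, mem_union,
        mem_image, notMem_empty, or_false] <;>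
      constructor
    · rintro (⟨h1, _, h3⟩ | ⟨h1, h2⟩)
      · exact Or.inr ⟨q.2, h3, Prod.ext h1 rfl⟩
      · exact Or.inl ⟨q.1, h2, Prod.ext rfl h1⟩
    · rintro (⟨u, hadj, rfl⟩ | ⟨v, hadj, rfl⟩)
      · exact Or.inr ⟨rfl, hadj⟩
      · exact Or.inl ⟨rfl, trivial, hadj⟩
    · rintro (⟨_, h2, _⟩ | ⟨h1, h2⟩)
      · exact h2.elim
      · exact ⟨q.1, h2, Prod.ext rfl h1⟩
    · rintro ⟨u, hadj, rfl⟩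
      exact Or.inr ⟨rfl, hadj⟩
  rw [hset, card_union_of_disjoint, card_image_of_injective _ (fun a b h => by
      simpa using congrArg Prod.fst h)]
  · congr 1
    split
    · exact card_image_of_injective _ (fun a b h => by simpa using congrArg Prod.snd h)
    · simp
  · split
    · rw [Finset.disjoint_left]
      rintro q hq hq'
      simp only [mem_image, mem_neighborFinset] at hq hq'
      obtain ⟨u, hu, rfl⟩ := hq
      obtain ⟨v, hv, h⟩ := hq'
      have : p.1 = u := congrArg Prod.fst h
      exact G.irrefl (this ▸ hu)
    · simp

theorem card_edges_hierProd {α β : Type*} [Fintype α] [Fintype β]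
    (G : SimpleGraph α) (H : SimpleGraph β) (U : Set α)
    (hG : G.Connected) (hH : H.Connected) (hU : U.Nonempty) :
    (hierProd G H U).edgeFinset.card =
      G.edgeFinset.card * Fintype.card β + H.edgeFinset.card * U.toFinset.card := by
  classical
  have key := (hierProd G H U).sum_degrees_eq_twice_card_edges
  have h2 : ∑ p : α × β, (hierProd G H U).degree p =
      2 * (G.edgeFinset.card * Fintype.card β + H.edgeFinset.card * U.toFinset.card) := by
    simp only [hierProd_degree]
    rw [Fintype.sum_prod_type]
    have : ∀ u : α, ∑ v : β, (G.degree u + if u ∈ U then H.degree v else 0) =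
        G.degree u * Fintype.card β + if u ∈ U then 2 * H.edgeFinset.card else 0 := by
      intro u
      rw [Finset.sum_add_distrib, Finset.sum_const, card_univ, smul_eq_mul, mul_comm]
      congr 1
      split
      · exact H.sum_degrees_eq_twice_card_edges
      · simp
    rw [Finset.sum_congr rfl fun u _ => this u, Finset.sum_add_distrib,
      ← Finset.sum_mul, G.sum_degrees_eq_twice_card_edges, Finset.sum_ite,
      Finset.sum_const, Finset.sum_const_zero, smul_eq_mul, add_zero]
    have hcard : Finset.univ.filter (· ∈ U) = U.toFinset := by
      ext a; simp
    rw [hcard]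
    ring
  omega
end

section
/- Let G and H be connected graphs and U a non-empty subset of V(G). Then the generalized hierarchical product G(U)ΠH is connected if and only if G and H are connected. -/
open SimpleGraph Finset
open scoped Classical

private lemma hierProd_proj1 {α β : Type*} {G : SimpleGraph α} {H : SimpleGraph β}
    {U : Set α} {p q : α × β} (w : (hierProd G H U).Walk p q) :
    G.Reachable p.1 q.1 := by
  induction w with
  | nil => exact SimpleGraph.Reachable.refl _
  | cons h _ ih =>
    rcases h with ⟨h1, _, _⟩ | ⟨_, h2⟩
    · exact h1 ▸ ih
    · exact h2.reachable.trans ih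

private lemma hierProd_proj2 {α β : Type*} {G : SimpleGraph α} {H : SimpleGraph β}
    {U : Set α} {p q : α × β} (w : (hierProd G H U).Walk p q) :
    H.Reachable p.2 q.2 := by
  induction w with
  | nil => exact SimpleGraph.Reachable.refl _
  | cons h _ ih =>
    rcases h with ⟨_, _, h3⟩ | ⟨h1, _⟩
    · exact h3.reachable.trans ih
    · exact h1 ▸ ih

private lemma hierProd_lift1 {α β : Type*} {G : SimpleGraph α} {H : SimpleGraph β}
    {U : Set α} {u u' : α} (w : G.Walk u u') (v : β) :
    (hierProd G H U).Reachable (u, v) (u', v) := by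
  induction w with
  | nil => exact SimpleGraph.Reachable.refl _
  | cons h _ ih =>
    exact (SimpleGraph.Adj.reachable (Or.inr ⟨rfl, h⟩)).trans ih

private lemma hierProd_lift2 {α β : Type*} {G : SimpleGraph α} {H : SimpleGraph β}
    {U : Set α} {u : α} (hu : u ∈ U) {v v' : β} (w : H.Walk v v') :
    (hierProd G H U).Reachable (u, v) (u, v') := by
  induction w with
  | nil => exact SimpleGraph.Reachable.refl _
  | cons h _ ih =>
    exact (SimpleGraph.Adj.reachable (Or.inl ⟨rfl, hu, h⟩)).trans ih

theorem hierProd_connected_iff {α β : Type*} [Fintype α] [Fintype β]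
    (G : SimpleGraph α) (H : SimpleGraph β) (U : Set α) (hU : U.Nonempty) :
    (hierProd G H U).Connected ↔ G.Connected ∧ H.Connected := by
  constructor
  · intro hc
    obtain ⟨⟨a, b⟩⟩ := hc.nonempty
    haveI : Nonempty α := ⟨a⟩
    haveI : Nonempty β := ⟨b⟩
    refine ⟨SimpleGraph.Connected.mk fun u u' => ?_,
      SimpleGraph.Connected.mk fun v v' => ?_⟩
    · obtain ⟨w⟩ := hc.preconnected (u, b) (u', b)
      exact hierProd_proj1 w
    · obtain ⟨w⟩ := hc.preconnected (a, v) (a, v')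
      exact hierProd_proj2 w
  · rintro ⟨hG, hH⟩
    obtain ⟨u0, hu0⟩ := hU
    haveI : Nonempty (α × β) := ⟨⟨hG.nonempty.some, hH.nonempty.some⟩⟩
    refine SimpleGraph.Connected.mk fun p q => ?_
    obtain ⟨w1⟩ := hG.preconnected p.1 u0
    obtain ⟨w2⟩ := hH.preconnected p.2 q.2
    obtain ⟨w3⟩ := hG.preconnected u0 q.1
    exact ((hierProd_lift1 w1 p.2).trans (hierProd_lift2 hu0 w2)).trans
      (hierProd_lift1 w3 q.2)
end
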